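/- Let F(p,A) = ⟨p, cof(−A) p⟩ when ⟨q,p⟩ = 0 implies ⟨q,Aq⟩ ≤ 0, and F(p,A) = 0 otherwise. Then for every p ∈ ℝ^d, every symmetric A, and every d×d matrix B, one has F(Bᵀp, BᵀAB) = det(B)² F(p,A). -/
import Mathlib


open Matrix

/-- The cofactor matrix of a square matrix: the transpose of the adjugate, i.e.
the unique continuous map with `cof M = det M • M⁻¹` for invertible `M`. -/
noncomputable def cof {d : ℕ} (M : Matrix (Fin d) (Fin d) ℝ) : Matrix (Fin d) (Fin d) ℝ :=
  (Matrix.adjugate M)ᵀ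

open Classical in
/-- The operator `F(p,A) = ⟨p, cof(−A) p⟩` when `A` is negative semidefinite on the
orthogonal complement of `p`, and `F(p,A) = 0` otherwise. -/
noncomputable def Fop {d : ℕ} (p : Fin d → ℝ) (A : Matrix (Fin d) (Fin d) ℝ) : ℝ :=
  if ∀ q : Fin d → ℝ, q ⬝ᵥ p = 0 → q ⬝ᵥ (A *ᵥ q) ≤ 0 then p ⬝ᵥ (cof (-A) *ᵥ p) else 0

lemma dot_transpose_mulVec {d : ℕ} (B : Matrix (Fin d) (Fin d) ℝ) (q w : Fin d → ℝ) :
    q ⬝ᵥ (Bᵀ *ᵥ w) = (B *ᵥ q) ⬝ᵥ w := by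
  rw [Matrix.dotProduct_mulVec, Matrix.vecMul_transpose]

lemma cof_mul {d : ℕ} (M N : Matrix (Fin d) (Fin d) ℝ) :
    cof (M * N) = cof M * cof N := by
  simp [cof, Matrix.adjugate_mul_distrib, Matrix.transpose_mul]

lemma key_quadform {d : ℕ} (p : Fin d → ℝ)
    (A B : Matrix (Fin d) (Fin d) ℝ) :
    (Bᵀ *ᵥ p) ⬝ᵥ (cof (-(Bᵀ * A * B)) *ᵥ (Bᵀ *ᵥ p)) =
      (B.det) ^ 2 * (p ⬝ᵥ (cof (-A) *ᵥ p)) := by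
  have h1 : -(Bᵀ * A * B) = Bᵀ * (-A) * B := by noncomm_ring
  rw [h1, cof_mul, cof_mul]
  have hBT : cof Bᵀ = Matrix.adjugate B := by
    simp [cof, Matrix.adjugate_transpose]
  have hB : cof B = Matrix.adjugate Bᵀ := by
    simp [cof, Matrix.adjugate_transpose]
  rw [hBT, hB]
  have h2 : (Matrix.adjugate Bᵀ) *ᵥ (Bᵀ *ᵥ p) = B.det • p := by
    rw [Matrix.mulVec_mulVec, Matrix.adjugate_mul, Matrix.det_transpose,
      Matrix.smul_mulVec, Matrix.one_mulVec]
  rw [Matrix.mulVec_mulVec, ← Matrix.mulVec_mulVec, ← Matrix.mulVec_mulVec, h2,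
    Matrix.mulVec_smul, dotProduct_smul, ← Matrix.mulVec_mulVec,
    Matrix.mulVec_transpose, Matrix.dotProduct_mulVec, Matrix.vecMul_vecMul,
    Matrix.mul_adjugate]
  have h3 : p ᵥ* (B.det • (1 : Matrix (Fin d) (Fin d) ℝ)) = B.det • p := by
    ext i
    simp [Matrix.vecMul, dotProduct, Finset.mul_sum, Matrix.one_apply, mul_comm]
  rw [h3, smul_dotProduct, smul_eq_mul, smul_eq_mul]
  ring

theorem Fop_affine_covariant {d : ℕ} (p : Fin d → ℝ)
    (A : Matrix (Fin d) (Fin d) ℝ) (hA : A.IsSymm) (B : Matrix (Fin d) (Fin d) ℝ) :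
    Fop (Bᵀ *ᵥ p) (Bᵀ * A * B) = (B.det) ^ 2 * Fop p A := by
  classical
  by_cases hB : IsUnit B.det
  · have hcond : (∀ q : Fin d → ℝ, q ⬝ᵥ (Bᵀ *ᵥ p) = 0 →
        q ⬝ᵥ ((Bᵀ * A * B) *ᵥ q) ≤ 0) ↔
        (∀ q : Fin d → ℝ, q ⬝ᵥ p = 0 → q ⬝ᵥ (A *ᵥ q) ≤ 0) := by
      have hq : ∀ q : Fin d → ℝ, q ⬝ᵥ ((Bᵀ * A * B) *ᵥ q) =
          (B *ᵥ q) ⬝ᵥ (A *ᵥ (B *ᵥ q)) := by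
        intro q
        rw [← Matrix.mulVec_mulVec, ← Matrix.mulVec_mulVec, dot_transpose_mulVec]
      constructor
      · intro h r hr
        have := h (B⁻¹ *ᵥ r) ?_
        · rwa [hq, Matrix.mulVec_mulVec, Matrix.mul_nonsing_inv B hB,
            Matrix.one_mulVec] at this
        · rw [dot_transpose_mulVec, Matrix.mulVec_mulVec, Matrix.mul_nonsing_inv B hB,
            Matrix.one_mulVec]
          exact hr
      · intro h q hqp
        rw [hq]
        exact h (B *ᵥ q) (by rwa [dot_transpose_mulVec] at hqp)
    rw [Fop, Fop, if_congr hcond rfl rfl]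
    by_cases hc : ∀ q : Fin d → ℝ, q ⬝ᵥ p = 0 → q ⬝ᵥ (A *ᵥ q) ≤ 0
    · rw [if_pos hc, if_pos hc, key_quadform]
    · rw [if_neg hc, if_neg hc, mul_zero]
  · have hdet : B.det = 0 := by
      simpa [isUnit_iff_ne_zero] using hB
    rw [Fop, Fop]
    by_cases hc : ∀ q : Fin d → ℝ, q ⬝ᵥ (Bᵀ *ᵥ p) = 0 →
        q ⬝ᵥ ((Bᵀ * A * B) *ᵥ q) ≤ 0
    · rw [if_pos hc, key_quadform, hdet]
      simp
    · rw [if_neg hc, hdet]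
      simp
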